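/- For all real numbers ω, ζ, and φ, the quantity l₂ = cosh²(ω)·cosh²(ζ)·(1 + tanh²(ω)·tanh²(ζ) + 2·tanh(ω)·tanh(ζ)·cos φ) satisfies l₂ ≥ cosh²(|ω| − |ζ|) ≥ 1. -/
import Mathlib


/-- For all real `ω`, `ζ`, `φ`, the quantity
`l₂ = cosh²(ω)·cosh²(ζ)·(1 + tanh²(ω)·tanh²(ζ) + 2·tanh(ω)·tanh(ζ)·cos φ)`
satisfies `l₂ ≥ cosh²(|ω| − |ζ|) ≥ 1`. -/
theorem l2_lower_bound (ω ζ φ : ℝ) :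
    Real.cosh ω ^ 2 * Real.cosh ζ ^ 2 *
        (1 + Real.tanh ω ^ 2 * Real.tanh ζ ^ 2 +
          2 * Real.tanh ω * Real.tanh ζ * Real.cos φ)
      ≥ Real.cosh (|ω| - |ζ|) ^ 2 ∧
    Real.cosh (|ω| - |ζ|) ^ 2 ≥ 1 := by
  constructor
  · have hc1 : (0:ℝ) < Real.cosh ω := Real.cosh_pos ω
    have hc2 : (0:ℝ) < Real.cosh ζ := Real.cosh_pos ζ
    have habs : ∀ x : ℝ, Real.sinh |x| = |Real.sinh x| := by
      intro x
      rcases le_or_gt 0 x with h | h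
      · rw [abs_of_nonneg h, abs_of_nonneg (Real.sinh_nonneg_iff.2 h)]
      · rw [abs_of_neg h, Real.sinh_neg, abs_of_neg (Real.sinh_neg_iff.2 h)]
    have hs1 : Real.sinh |ω| = Real.cosh ω * |Real.tanh ω| := by
      rw [habs, Real.tanh_eq_sinh_div_cosh, abs_div,
        abs_of_pos hc1, mul_div_cancel₀ _ hc1.ne']
    have hs2 : Real.sinh |ζ| = Real.cosh ζ * |Real.tanh ζ| := by
      rw [habs, Real.tanh_eq_sinh_div_cosh, abs_div,
        abs_of_pos hc2, mul_div_cancel₀ _ hc2.ne']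
    have hcosh : Real.cosh (|ω| - |ζ|)
        = Real.cosh ω * Real.cosh ζ * (1 - |Real.tanh ω| * |Real.tanh ζ|) := by
      rw [Real.cosh_sub, Real.cosh_abs, Real.cosh_abs, hs1, hs2]
      ring
    rw [hcosh]
    have ht : Real.tanh ω * Real.tanh ζ * Real.cos φ ≥ -(|Real.tanh ω| * |Real.tanh ζ|) := by
      have h1 : |Real.tanh ω * Real.tanh ζ * Real.cos φ| ≤ |Real.tanh ω| * |Real.tanh ζ| := by
        rw [abs_mul, abs_mul]
        have := Real.abs_cos_le_one φ
        calc |Real.tanh ω| * |Real.tanh ζ| * |Real.cos φ|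
            ≤ |Real.tanh ω| * |Real.tanh ζ| * 1 :=
              mul_le_mul_of_nonneg_left this
                (mul_nonneg (abs_nonneg _) (abs_nonneg _))
          _ = |Real.tanh ω| * |Real.tanh ζ| := mul_one _
      linarith [neg_abs_le (Real.tanh ω * Real.tanh ζ * Real.cos φ)]
    have hsq1 : |Real.tanh ω| ^ 2 = Real.tanh ω ^ 2 := sq_abs _
    have hsq2 : |Real.tanh ζ| ^ 2 = Real.tanh ζ ^ 2 := sq_abs _
    have hu2 : (|Real.tanh ω| * |Real.tanh ζ|) ^ 2 = Real.tanh ω ^ 2 * Real.tanh ζ ^ 2 := by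
      rw [mul_pow, hsq1, hsq2]
    nlinarith [mul_nonneg (sq_nonneg (Real.cosh ω * Real.cosh ζ))
        (show (0:ℝ) ≤ Real.tanh ω * Real.tanh ζ * Real.cos φ + |Real.tanh ω| * |Real.tanh ζ| by linarith),
      sq_nonneg (Real.cosh ω * Real.cosh ζ)]
  · have := Real.one_le_cosh (|ω| - |ζ|)
    nlinarith
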